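/- There is a constant c, depending only on ℓ, such that Σ ℙ[f(X_{i1}, …, X_{iℓ}) > (i1² + ⋯ + iℓ²)^{ℓ/2}] ≤ c · E[f(X1, …, Xℓ)], the sum running over all ℓ-tuples (i1, …, iℓ) of pairwise distinct positive integers; in particular this series converges. -/

import Mathlib

set_option maxHeartbeats 1000000


open MeasureTheory ProbabilityTheory
open scoped ENNReal NNReal

universe u v

/-- `ρ_i = (i₁² + ⋯ + i_ℓ²)^{1/2}`, the Euclidean norm of the tuple of indices. -/
noncomputable def rhoTuple (ℓ : ℕ) (c : Fin ℓ → ℕ) : ℝ :=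
  Real.sqrt (∑ k, ((c k : ℝ)) ^ 2)

/-- The joint law of an injective tuple of independent identically distributed random
variables is the product measure. -/
lemma joint_law {Ω : Type u} {S : Type v} [MeasurableSpace Ω] [MeasurableSpace S]
    (P : Measure Ω) (μ : Measure S) [SigmaFinite μ] {ℓ : ℕ}
    (Y : ℕ → Ω → S) (hY : ∀ i, Measurable (Y i))
    (hind : iIndepFun Y P)
    (hlaw : ∀ i, P.map (Y i) = μ) (τ : Fin ℓ → ℕ) (hτ : Function.Injective τ) :
    P.map (fun ω k => Y (τ k) ω) = Measure.pi (fun _ : Fin ℓ => μ) := by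
  classical
  have hT : Measurable (fun ω k => Y (τ k) ω) :=
    measurable_pi_lambda _ fun k => hY (τ k)
  refine (Measure.pi_eq fun s hs => ?_).symm
  set sets : ∀ _ : ℕ, Set S :=
    fun n => if h : ∃ k, τ k = n then s h.choose else Set.univ with hsets
  have key : ∀ k, sets (τ k) = s k := by
    intro k
    have h : ∃ k', τ k' = τ k := ⟨k, rfl⟩
    simp only [hsets, dif_pos h]
    exact congrArg s (hτ h.choose_spec)
  rw [Measure.map_apply hT (MeasurableSet.univ_pi hs)]
  have hpre : (fun ω k => Y (τ k) ω) ⁻¹' (Set.pi Set.univ s)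
      = ⋂ i ∈ Finset.image τ Finset.univ, Y i ⁻¹' sets i := by
    ext ω
    simp only [Set.mem_preimage, Set.mem_pi, Set.mem_univ, true_implies, Set.mem_iInter,
      Finset.mem_image, Finset.mem_univ, true_and]
    constructor
    · rintro h n ⟨k, rfl⟩
      rw [key k]; exact h k
    · intro h k
      have := h (τ k) ⟨k, rfl⟩
      rwa [key k] at this
  have hmeas : ∀ i ∈ Finset.image τ Finset.univ, MeasurableSet (sets i) := by
    intro i hi
    simp only [Finset.mem_image, Finset.mem_univ, true_and] at hi
    obtain ⟨k, rfl⟩ := hi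
    rw [key k]; exact hs k
  have hprod := hind.measure_inter_preimage_eq_mul (Finset.image τ Finset.univ) hmeas
  rw [hpre, hprod, Finset.prod_image (fun a _ b _ h => hτ h)]
  refine Finset.prod_congr rfl fun k _ => ?_
  rw [key k, ← Measure.map_apply (hY (τ k)) (hs k), hlaw]

/-- Each coordinate is at most the Euclidean norm of the tuple. -/
lemma coord_pow_le (ℓ : ℕ) (j : Fin ℓ → ℕ) (k : Fin ℓ) :
    ((j k : ℝ)) ^ ℓ ≤ rhoTuple ℓ j ^ ℓ := by
  refine pow_le_pow_left₀ (Nat.cast_nonneg _) ?_ ℓ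
  have h : ((j k : ℝ)) ^ 2 ≤ ∑ k', ((j k' : ℝ)) ^ 2 :=
    Finset.single_le_sum (f := fun k' => ((j k' : ℝ)) ^ 2) (fun _ _ => sq_nonneg _) (Finset.mem_univ k)
  calc (j k : ℝ) = Real.sqrt (((j k : ℝ)) ^ 2) := (Real.sqrt_sq (Nat.cast_nonneg _)).symm
    _ ≤ rhoTuple ℓ j := Real.sqrt_le_sqrt h

/-- Counting bound: the number of tuples of positive integers whose Euclidean norm to the
power `ℓ` is less than `t` is at most `t`. -/
lemma count_bound (ℓ : ℕ) (hℓ : 1 ≤ ℓ) (t : ℝ) :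
    (∑' i : {c : Fin ℓ → ℕ // Function.Injective c ∧ ∀ k, 1 ≤ c k},
      (if rhoTuple ℓ i.1 ^ ℓ < t then (1 : ℝ≥0∞) else 0)) ≤ ENNReal.ofReal t := by
  classical
  set B : Finset ℕ := (Finset.Icc 1 ⌊t⌋₊).filter (fun n => (n : ℝ) ^ ℓ < t) with hB
  have hmemB : ∀ n : ℕ, 1 ≤ n → (n : ℝ) ^ ℓ < t → n ∈ B := by
    intro n h1 h2
    refine Finset.mem_filter.2 ⟨Finset.mem_Icc.2 ⟨h1, Nat.le_floor ?_⟩, h2⟩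
    calc (n : ℝ) = (n : ℝ) ^ 1 := (pow_one _).symm
      _ ≤ (n : ℝ) ^ ℓ := pow_le_pow_right₀ (by exact_mod_cast h1) hℓ
      _ ≤ t := le_of_lt h2
  by_cases hBne : B.Nonempty
  · -- `M` is the largest admissible coordinate value
    set M := B.max' hBne with hM
    have hMB : M ∈ B := B.max'_mem hBne
    have hMt : (M : ℝ) ^ ℓ < t := (Finset.mem_filter.1 hMB).2
    set A : Set (Fin ℓ → ℕ) := {j | ∀ k, j k ∈ B} with hA
    calc (∑' i : {c : Fin ℓ → ℕ // Function.Injective c ∧ ∀ k, 1 ≤ c k},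
            (if rhoTuple ℓ i.1 ^ ℓ < t then (1 : ℝ≥0∞) else 0))
        ≤ ∑' i : {c : Fin ℓ → ℕ // Function.Injective c ∧ ∀ k, 1 ≤ c k},
            A.indicator (fun _ => (1 : ℝ≥0∞)) i.1 := by
          refine ENNReal.tsum_le_tsum fun i => ?_
          by_cases h : rhoTuple ℓ i.1 ^ ℓ < t
          · rw [if_pos h, Set.indicator_of_mem]
            intro k
            exact hmemB _ (i.2.2 k) (lt_of_le_of_lt (coord_pow_le ℓ i.1 k) h)
          · rw [if_neg h]; exact zero_le
      _ ≤ ∑' j : Fin ℓ → ℕ, A.indicator (fun _ => (1 : ℝ≥0∞)) j :=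
          ENNReal.tsum_comp_le_tsum_of_injective Subtype.val_injective _
      _ = ∑ j ∈ Fintype.piFinset (fun _ : Fin ℓ => B),
            A.indicator (fun _ => (1 : ℝ≥0∞)) j := by
          refine tsum_eq_sum fun j hj => Set.indicator_of_notMem (fun hjA => hj ?_) _
          exact Fintype.mem_piFinset.2 fun k => hjA k
      _ ≤ ∑ _j ∈ Fintype.piFinset (fun _ : Fin ℓ => B), (1 : ℝ≥0∞) := by
          refine Finset.sum_le_sum fun j _ => ?_
          by_cases h : j ∈ A
          · rw [Set.indicator_of_mem h]
          · rw [Set.indicator_of_notMem h]; exact zero_le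
      _ = ((B.card ^ ℓ : ℕ) : ℝ≥0∞) := by
          simp [Finset.sum_const, Fintype.card_piFinset_const]
      _ ≤ ENNReal.ofReal t := by
          rw [← ENNReal.ofReal_natCast]
          refine ENNReal.ofReal_le_ofReal (le_of_lt ?_)
          have hcard : B.card ≤ M := by
            have hsub : B ⊆ Finset.Icc 1 M := by
              intro n hn
              exact Finset.mem_Icc.2
                ⟨(Finset.mem_Icc.1 (Finset.mem_filter.1 hn).1).1, B.le_max' n hn⟩
            calc B.card ≤ (Finset.Icc 1 M).card := Finset.card_le_card hsub
              _ = M := by rw [Nat.card_Icc]; omega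
          calc ((B.card ^ ℓ : ℕ) : ℝ) = ((B.card : ℝ)) ^ ℓ := by push_cast; ring
            _ ≤ (M : ℝ) ^ ℓ :=
              pow_le_pow_left₀ (Nat.cast_nonneg _) (by exact_mod_cast hcard) ℓ
            _ < t := hMt
  · -- no admissible coordinate, so the sum vanishes
    have hz : ∀ i : {c : Fin ℓ → ℕ // Function.Injective c ∧ ∀ k, 1 ≤ c k},
        (if rhoTuple ℓ i.1 ^ ℓ < t then (1 : ℝ≥0∞) else 0) = 0 := by
      intro i
      rw [if_neg]
      intro hlt
      exact hBne ⟨i.1 ⟨0, hℓ⟩,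
        hmemB _ (i.2.2 _) (lt_of_le_of_lt (coord_pow_le ℓ i.1 ⟨0, hℓ⟩) hlt)⟩
    rw [tsum_congr hz, tsum_zero]
    exact zero_le

/-- There is a constant `c`, depending only on `ℓ ≥ 1`, such that for every i.i.d. sequence
`(X_i)_{i ≥ 1}` with values in a Polish space `S` and every Borel measurable
`f : S^ℓ → [0,∞)` with `E f(X_1, …, X_ℓ) < ∞`, the series
`Σ ℙ[f(X_{i₁}, …, X_{i_ℓ}) > (i₁² + ⋯ + i_ℓ²)^{ℓ/2}]`, summed over all `ℓ`-tuples of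
pairwise distinct positive integers, is at most `c · E[f(X_1, …, X_ℓ)]`; in particular this
series converges. -/
theorem stmt_18 (ℓ : ℕ) (hℓ : 1 ≤ ℓ) :
    ∃ c : ℝ, ∀ (Ω : Type u) (S : Type v)
      [MeasurableSpace Ω] [MeasurableSpace S]
      [TopologicalSpace S] [PolishSpace S] [BorelSpace S]
      (P : Measure Ω) [IsProbabilityMeasure P] (μ : Measure S)
      (X : ℕ → Ω → S), (∀ i, Measurable (X i)) →
      iIndepFun (fun i : ℕ => X (i + 1)) P →
      (∀ i : ℕ, P.map (X (i + 1)) = μ) →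
      ∀ f : (Fin ℓ → S) → ℝ, Measurable f → (∀ x, 0 ≤ f x) →
      Integrable (fun ω => f fun k => X ((k : ℕ) + 1) ω) P →
      (∑' i : {c : Fin ℓ → ℕ // Function.Injective c ∧ ∀ k, 1 ≤ c k},
          P {ω | rhoTuple ℓ i.1 ^ ℓ < f fun k => X (i.1 k) ω})
        ≤ ENNReal.ofReal (c * ∫ ω, f (fun k => X ((k : ℕ) + 1) ω) ∂P) ∧
      (∑' i : {c : Fin ℓ → ℕ // Function.Injective c ∧ ∀ k, 1 ≤ c k},
          P {ω | rhoTuple ℓ i.1 ^ ℓ < f fun k => X (i.1 k) ω}) ≠ ⊤ := by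
  refine ⟨1, ?_⟩
  intro Ω S _ _ _ _ _ P _ μ X hX hind hlaw f hf hf0 hfint
  haveI hμprob : IsProbabilityMeasure μ := by
    rw [← hlaw 0]; exact Measure.isProbabilityMeasure_map (hX 1).aemeasurable
  set ν : Measure (Fin ℓ → S) := Measure.pi (fun _ : Fin ℓ => μ) with hν
  -- joint law of any injective tuple of positive indices
  have hjoint : ∀ τ : Fin ℓ → ℕ, Function.Injective τ → (∀ k, 1 ≤ τ k) →
      P.map (fun ω k => X (τ k) ω) = ν := by
    intro τ hτ hτ1
    have hσ : Function.Injective (fun k => τ k - 1) := by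
      intro a b h
      apply hτ
      have h' := congrArg (· + 1) h
      simpa [Nat.sub_add_cancel (hτ1 a), Nat.sub_add_cancel (hτ1 b)] using h'
    have heq : (fun ω k => X (τ k) ω) = (fun ω k => X ((τ k - 1) + 1) ω) := by
      funext ω k
      rw [Nat.sub_add_cancel (hτ1 k)]
    rw [heq]
    exact joint_law P μ (fun i => X (i + 1)) (fun i => hX (i + 1)) hind hlaw _ hσ
  set T0 : Ω → (Fin ℓ → S) := fun ω k => X ((k : ℕ) + 1) ω with hT0
  have hT0m : Measurable T0 := measurable_pi_lambda _ fun k => hX _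
  have hT0law : P.map T0 = ν :=
    hjoint (fun k => (k : ℕ) + 1) (fun a b h => Fin.val_injective (Nat.succ_injective h))
      (fun k => Nat.le_add_left 1 _)
  have hfν : Integrable f ν := by
    rw [← hT0law]
    refine (integrable_map_measure hf.aestronglyMeasurable hT0m.aemeasurable).2 ?_
    exact hfint
  have hint_eq : ∫ ω, f (fun k => X ((k : ℕ) + 1) ω) ∂P = ∫ x, f x ∂ν := by
    rw [← hT0law, integral_map hT0m.aemeasurable hf.aestronglyMeasurable]
  set Sset : (Fin ℓ → ℕ) → Set (Fin ℓ → S) := fun j => {x | rhoTuple ℓ j ^ ℓ < f x}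
    with hSset
  have hSm : ∀ j, MeasurableSet (Sset j) := fun j => measurableSet_lt measurable_const hf
  have hterm : ∀ i : {c : Fin ℓ → ℕ // Function.Injective c ∧ ∀ k, 1 ≤ c k},
      P {ω | rhoTuple ℓ i.1 ^ ℓ < f fun k => X (i.1 k) ω} = ν (Sset i.1) := by
    intro i
    have hm : Measurable (fun ω k => X (i.1 k) ω) := measurable_pi_lambda _ fun k => hX _
    have hpre : {ω | rhoTuple ℓ i.1 ^ ℓ < f fun k => X (i.1 k) ω}
        = (fun ω k => X (i.1 k) ω) ⁻¹' (Sset i.1) := rfl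
    rw [hpre, ← Measure.map_apply hm (hSm i.1), hjoint i.1 i.2.1 i.2.2]
  have hpoint : ∀ x, (∑' i : {c : Fin ℓ → ℕ // Function.Injective c ∧ ∀ k, 1 ≤ c k},
      (Sset i.1).indicator (fun _ => (1 : ℝ≥0∞)) x) ≤ ENNReal.ofReal (f x) := by
    intro x
    have h1 : ∀ i : {c : Fin ℓ → ℕ // Function.Injective c ∧ ∀ k, 1 ≤ c k},
        (Sset i.1).indicator (fun _ => (1 : ℝ≥0∞)) x
          = (if rhoTuple ℓ i.1 ^ ℓ < f x then (1 : ℝ≥0∞) else 0) := by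
      intro i
      simp [Set.indicator_apply, hSset]
    rw [tsum_congr h1]
    exact count_bound ℓ hℓ (f x)
  have hmain : (∑' i : {c : Fin ℓ → ℕ // Function.Injective c ∧ ∀ k, 1 ≤ c k},
        P {ω | rhoTuple ℓ i.1 ^ ℓ < f fun k => X (i.1 k) ω})
      ≤ ENNReal.ofReal (∫ ω, f (fun k => X ((k : ℕ) + 1) ω) ∂P) := by
    rw [tsum_congr hterm]
    calc (∑' i : {c : Fin ℓ → ℕ // Function.Injective c ∧ ∀ k, 1 ≤ c k}, ν (Sset i.1))
        = ∑' i : {c : Fin ℓ → ℕ // Function.Injective c ∧ ∀ k, 1 ≤ c k},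
            ∫⁻ x, (Sset i.1).indicator (fun _ => (1 : ℝ≥0∞)) x ∂ν :=
          tsum_congr fun i => (lintegral_indicator_one (hSm i.1)).symm
      _ = ∫⁻ x, (∑' i : {c : Fin ℓ → ℕ // Function.Injective c ∧ ∀ k, 1 ≤ c k},
            (Sset i.1).indicator (fun _ => (1 : ℝ≥0∞)) x) ∂ν :=
          (lintegral_tsum
            (f := fun (i : {c : Fin ℓ → ℕ // Function.Injective c ∧ ∀ k, 1 ≤ c k})
              (x : Fin ℓ → S) => (Sset i.1).indicator (fun _ => (1 : ℝ≥0∞)) x)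
            (fun i => (measurable_const.indicator (hSm i.1)).aemeasurable)).symm
      _ ≤ ∫⁻ x, ENNReal.ofReal (f x) ∂ν := lintegral_mono hpoint
      _ = ENNReal.ofReal (∫ x, f x ∂ν) :=
          (ofReal_integral_eq_lintegral_ofReal hfν (Filter.Eventually.of_forall hf0)).symm
      _ = ENNReal.ofReal (∫ ω, f (fun k => X ((k : ℕ) + 1) ω) ∂P) := by rw [hint_eq]
  constructor
  · rw [one_mul]; exact hmain
  · exact (lt_of_le_of_lt hmain ENNReal.ofReal_lt_top).ne
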